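/- Let w be a string whose first symbol $ occurs nowhere else in w. If x is a right-maximal substring of w and xa is a supermaximal right-extension of w, then the reversal x^R is a right-maximal substring of the reversed string w^R. -/

import Mathlib

variable {α : Type*}

/-- `x` is a right-maximal substring of `w`. -/
def RightMaximal (w x : List α) : Prop :=
  ∃ a b : α, a ≠ b ∧ (x ++ [a]) <:+: w ∧ (x ++ [b]) <:+: w

/-- `y` is a right-extension of `w`. -/
def RightExt (w y : List α) : Prop :=
  ∃ (x : List α) (a : α), RightMaximal w x ∧ y = x ++ [a] ∧ y <:+: w

/-- `y` is a supermaximal right-extension of `w`: a right-extension that is not a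
proper suffix of any other right-extension. -/
def Supermaximal (w y : List α) : Prop :=
  RightExt w y ∧ ∀ z, RightExt w z → y <:+ z → z = y

/-- The number of supermaximal right-extensions of `w`. -/
noncomputable def sre (w : List α) : ℕ :=
  {y | Supermaximal w y}.ncard

lemma mem_infix_singleton {a : α} {l : List α} (h : a ∈ l) : [a] <:+: l := by
  obtain ⟨s, t, rfl⟩ := List.append_of_mem h
  exact ⟨s, t, by simp⟩

lemma exists_prec {w y : List α} (hy : ¬ y <+: w) (h : y <:+: w) :
    ∃ c, c :: y <:+: w := by
  obtain ⟨t, u, ht⟩ := h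
  rcases t.eq_nil_or_concat with rfl | ⟨t₂, c, rfl⟩
  · exact absurd ⟨u, by simpa using ht⟩ hy
  · exact ⟨c, t₂, u, by simpa using ht⟩

lemma not_prefix {v x : List α} {dollar s : α} (hd : dollar ∉ x) (hx : x ≠ []) :
    ¬ (x ++ [s] <+: dollar :: v) := by
  intro h
  cases x with
  | nil => exact hx rfl
  | cons x0 x' =>
    obtain ⟨u, hu⟩ := h
    simp only [List.cons_append, List.cons.injEq] at hu
    exact hd (hu.1 ▸ List.mem_cons_self)

theorem reverse_rightMaximal (v x : List α) (dollar : α) (hd : dollar ∉ v)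
    (a : α) (hx : RightMaximal (dollar :: v) x)
    (hsup : Supermaximal (dollar :: v) (x ++ [a])) :
    RightMaximal (dollar :: v).reverse x.reverse := by
  obtain ⟨a', b', hab, ha', hb'⟩ := hx
  -- reduce goal to finding two distinct left extensions of x
  suffices h : ∃ p q : α, p ≠ q ∧ (p :: x) <:+: dollar :: v ∧ (q :: x) <:+: dollar :: v by
    obtain ⟨p, q, hpq, hp, hq⟩ := h
    refine ⟨p, q, hpq, ?_, ?_⟩
    · have := List.reverse_infix.mpr hp
      simpa using this
    · have := List.reverse_infix.mpr hq
      simpa using this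
  by_cases hdx : dollar ∈ x
  · -- every occurrence of x is at position 0; contradiction with a' ≠ b'
    exfalso
    have key : ∀ s : α, x ++ [s] <:+: dollar :: v → x ++ [s] <+: dollar :: v := by
      rintro s ⟨t, u, ht⟩
      rcases t with _ | ⟨t0, t'⟩
      · exact ⟨u, by simpa using ht⟩
      · exfalso
        apply hd
        have hv : v = t' ++ (x ++ [s]) ++ u := by
          have := ht.symm
          simp only [List.cons_append, List.cons.injEq, List.append_assoc] at this ⊢
          exact this.2
        rw [hv]; simp [hdx]
    obtain ⟨u1, e1⟩ := key a' ha'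
    obtain ⟨u2, e2⟩ := key b' hb'
    rw [← e2] at e1
    exact hab (show a' = b' ∧ u1 = u2 by simpa using e1).1
  · rcases eq_or_ne x [] with rfl | hxne
    · -- x = [] : use dollar and some letter of v
      have hv : v ≠ [] := by
        rintro rfl
        obtain ⟨t, u, ht⟩ := ha'
        obtain ⟨t', u', ht'⟩ := hb'
        have h1 : a' = dollar := by
          cases t <;> simp_all
        have h2 : b' = dollar := by
          cases t' <;> simp_all
        exact hab (h1.trans h2.symm)
      obtain ⟨c, hc⟩ := List.exists_mem_of_ne_nil v hv
      refine ⟨dollar, c, fun h => hd (h ▸ hc), ?_, ?_⟩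
      · exact mem_infix_singleton List.mem_cons_self
      · exact mem_infix_singleton (List.mem_cons_of_mem _ hc)
    · -- x ≠ [], dollar ∉ x : every occurrence of x has a preceding symbol
      obtain ⟨c, hc⟩ := exists_prec (not_prefix hdx hxne) ha'
      obtain ⟨e, he⟩ := exists_prec (not_prefix hdx hxne) hb'
      obtain ⟨_, _, _, _, hinf⟩ := hsup.1
      obtain ⟨f, hf⟩ := exists_prec (not_prefix hdx hxne) hinf
      have hcx : (c :: x) <:+: dollar :: v :=
        (List.prefix_append (c :: x) [a']).isInfix.trans (by simpa using hc)
      have hex : (e :: x) <:+: dollar :: v :=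
        (List.prefix_append (e :: x) [b']).isInfix.trans (by simpa using he)
      by_cases hce : c = e
      · by_cases hfc : f = c
        · -- all preceding symbols equal c: c::x is right-maximal,
          -- so c::(x++[a]) is a right-extension, contradicting supermaximality
          exfalso
          have he' : c :: (x ++ [b']) <:+: dollar :: v := hce.symm ▸ he
          have hf' : c :: (x ++ [a]) <:+: dollar :: v := hfc ▸ hf
          have hrm : RightMaximal (dollar :: v) (c :: x) :=
            ⟨a', b', hab, by simpa using hc, by simpa using he'⟩
          have hre : RightExt (dollar :: v) (c :: (x ++ [a])) :=
            ⟨c :: x, a, hrm, by simp, hf'⟩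
          have := hsup.2 _ hre ⟨[c], rfl⟩
          have hlen := congrArg List.length this
          simp at hlen
        · have hfx : (f :: x) <:+: dollar :: v :=
            (List.prefix_append (f :: x) [a]).isInfix.trans (by simpa using hf)
          exact ⟨f, c, hfc, hfx, hcx⟩
      · exact ⟨c, e, hce, hcx, hex⟩
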